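/- Fix positive reals p_min ≤ p_max with θ = p_max/p_min, and C > 0. Suppose for each t ∈ {1,...,T} the function g_t : [0, δ_t] → ℝ is concave, differentiable, increasing with g_t(0) = 0 and derivative in [p_min, p_max]. Let OPT(t) denote the optimum of maximizing Σ_{τ≤t} g_τ(v_τ) subject to Σ_{τ≤t} v_τ ≤ C and 0 ≤ v_τ ≤ δ_τ. If π = ln θ + 1 and v̂_t satisfies g_t(v̂_t) = (1/π)(OPT(t) − OPT(t−1)) for each t (with OPT(0)=0), then Σ_{t=1}^T v̂_t ≤ C and Σ_{t=1}^T g_t(v̂_t) = (1/π)·OPT(T). -/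

import Mathlib

open MeasureTheory Set


lemma vol_squeeze {S : Set ℝ} {m : ℝ} (hm : 0 ≤ m) (h1 : Set.Ico 0 m ⊆ S)
    (h2 : S ⊆ Set.Icc 0 m) : (volume S).toReal = m := by
  have hlow : ENNReal.ofReal m ≤ volume S := by
    simpa [Real.volume_Ico] using measure_mono (μ := volume) h1
  have hhigh : volume S ≤ ENNReal.ofReal m := by
    simpa [Real.volume_Icc] using measure_mono (μ := volume) h2
  have : volume S = ENNReal.ofReal m := le_antisymm hhigh hlow
  rw [this, ENNReal.toReal_ofReal hm]

noncomputable def svol (D : ℝ → ℝ) (v p : ℝ) : ℝ :=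
  (volume {x : ℝ | x ∈ Set.Ico 0 v ∧ p < D x}).toReal

lemma svol_nonneg (D : ℝ → ℝ) (v p : ℝ) : 0 ≤ svol D v p := ENNReal.toReal_nonneg

lemma svol_interval {D : ℝ → ℝ} (hD : Antitone D) {v : ℝ} (hv : 0 ≤ v) (p : ℝ) :
    Set.Ico 0 (svol D v p) ⊆ {x : ℝ | x ∈ Set.Ico 0 v ∧ p < D x} ∧
    {x : ℝ | x ∈ Set.Ico 0 v ∧ p < D x} ⊆ Set.Icc 0 (svol D v p) := by
  set S := {x : ℝ | x ∈ Set.Ico 0 v ∧ p < D x} with hS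
  have hsub : S ⊆ Set.Ico 0 v := fun x hx => hx.1
  have hfin : volume S ≠ ⊤ := by
    refine ne_top_of_le_ne_top ?_ (measure_mono (μ := volume) hsub)
    simp [Real.volume_Ico]
  have hdc : ∀ x ∈ S, ∀ y, 0 ≤ y → y ≤ x → y ∈ S := by
    rintro x ⟨⟨hx0, hxv⟩, hxD⟩ y hy0 hyx
    exact ⟨⟨hy0, lt_of_le_of_lt hyx hxv⟩, lt_of_lt_of_le hxD (hD hyx)⟩
  constructor
  · rintro x ⟨hx0, hxm⟩
    by_contra hxS
    have hSx : S ⊆ Set.Icc 0 x := by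
      rintro y hy
      refine ⟨hy.1.1, ?_⟩
      by_contra hxy
      exact hxS (hdc y hy x hx0 (le_of_not_ge hxy))
    have h1 : volume S ≤ ENNReal.ofReal x := by
      simpa [Real.volume_Icc] using measure_mono (μ := volume) hSx
    have : svol D v p ≤ x := ENNReal.toReal_le_of_le_ofReal hx0 h1
    linarith
  · rintro x hx
    refine ⟨hx.1.1, ?_⟩
    have hIco : Set.Ico 0 x ⊆ S := fun y hy => hdc x hx y hy.1 hy.2.le
    have h1 : ENNReal.ofReal x ≤ volume S := by
      simpa [Real.volume_Ico] using measure_mono (μ := volume) hIco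
    rw [svol, ← ENNReal.toReal_ofReal hx.1.1]
    exact (ENNReal.toReal_le_toReal (by simp) hfin).2 h1

lemma svol_le {D : ℝ → ℝ} (hD : Antitone D) {v : ℝ} (hv : 0 ≤ v) (p : ℝ) :
    svol D v p ≤ v := by
  by_contra h
  have hv' : v ∈ Set.Ico 0 (svol D v p) := ⟨hv, lt_of_not_ge h⟩
  exact absurd ((svol_interval hD hv p).1 hv').1.2 (lt_irrefl v)

lemma svol_anti {D : ℝ → ℝ} (hD : Antitone D) {v : ℝ} (hv : 0 ≤ v) :
    Antitone (svol D v) := by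
  intro p q hpq
  have hsub : {x : ℝ | x ∈ Set.Ico 0 v ∧ q < D x} ⊆ {x : ℝ | x ∈ Set.Ico 0 v ∧ p < D x} :=
    fun x hx => ⟨hx.1, lt_of_le_of_lt hpq hx.2⟩
  have hfin : volume {x : ℝ | x ∈ Set.Ico 0 v ∧ p < D x} ≠ ⊤ := by
    refine ne_top_of_le_ne_top ?_ (measure_mono (μ := volume) (fun x hx => hx.1))
    simp [Real.volume_Ico]
  exact ENNReal.toReal_mono hfin (measure_mono hsub)

lemma svol_eq_zero {D : ℝ → ℝ} {pmax : ℝ} (hbd : ∀ x, D x ≤ pmax) {v p : ℝ}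
    (hp : pmax ≤ p) : svol D v p = 0 := by
  have : {x : ℝ | x ∈ Set.Ico 0 v ∧ p < D x} = ∅ := by
    ext x; simp only [Set.mem_setOf_eq, Set.mem_empty_iff_false, iff_false, not_and]
    intro _
    exact not_lt.2 ((hbd x).trans hp)
  rw [svol, this]; simp

lemma svol_min {D : ℝ → ℝ} (hD : Antitone D) {w v : ℝ} (hw : 0 ≤ w) (hwv : w ≤ v) (p : ℝ) :
    svol D w p = min w (svol D v p) := by
  have hv : 0 ≤ v := hw.trans hwv
  have hm : 0 ≤ min w (svol D v p) := le_min hw (svol_nonneg D v p)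
  refine vol_squeeze hm ?_ ?_
  · rintro x ⟨hx0, hxm⟩
    have hx1 : x < w := lt_of_lt_of_le hxm (min_le_left _ _)
    have hx2 : x ∈ Set.Ico 0 (svol D v p) := ⟨hx0, lt_of_lt_of_le hxm (min_le_right _ _)⟩
    have := (svol_interval hD hv p).1 hx2
    exact ⟨⟨hx0, hx1⟩, this.2⟩
  · rintro x ⟨⟨hx0, hxw⟩, hxD⟩
    have hxv : x ∈ {y : ℝ | y ∈ Set.Ico 0 v ∧ p < D y} := ⟨⟨hx0, lt_of_lt_of_le hxw hwv⟩, hxD⟩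
    have := (svol_interval hD hv p).2 hxv
    exact ⟨hx0, le_min hxw.le this.2⟩

lemma layercake_item {D : ℝ → ℝ} {pmin pmax v : ℝ} (hD : Antitone D)
    (hlo : ∀ x, pmin ≤ D x) (hhi : ∀ x, D x ≤ pmax) (hv : 0 ≤ v) :
    ∫ x in (0:ℝ)..v, D x
      = pmin * v + ∫ s in (0:ℝ)..(pmax - pmin), svol D v (pmin + s) := by
  have hp : pmin ≤ pmax := (hlo 0).trans (hhi 0)
  have hR : (0:ℝ) ≤ pmax - pmin := by linarith
  set μ := volume.restrict (Set.Ico 0 v) with hμ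
  have hDm : Measurable D := hD.measurable
  have hfm : Measurable (fun x => D x - pmin) := hDm.sub measurable_const
  have hconst : Integrable (fun _ : ℝ => pmax - pmin) μ := by
    rw [hμ]
    refine integrableOn_const ?_ (by simp)
    simp [Real.volume_Ico]
  have hfint : Integrable (fun x => D x - pmin) μ := by
    refine hconst.mono' hfm.aestronglyMeasurable ?_
    refine Filter.Eventually.of_forall (fun x => ?_)
    rw [Real.norm_eq_abs, abs_le]
    constructor <;> [linarith [hlo x]; linarith [hhi x]]
  have hnn : 0 ≤ᵐ[μ] (fun x => D x - pmin) :=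
    Filter.Eventually.of_forall (fun x => by simp; linarith [hlo x])
  have key := hfint.integral_eq_integral_meas_lt hnn
  -- identify the inner measure with svol
  have hmeas : ∀ t : ℝ, (μ {a : ℝ | t < D a - pmin}).toReal = svol D v (pmin + t) := by
    intro t
    have hms : MeasurableSet {a : ℝ | t < D a - pmin} := measurableSet_lt measurable_const hfm
    have hset : {a : ℝ | t < D a - pmin} ∩ Set.Ico 0 v
        = {x : ℝ | x ∈ Set.Ico 0 v ∧ pmin + t < D x} := by
      ext x
      simp only [Set.mem_inter_iff, Set.mem_setOf_eq]
      constructor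
      · rintro ⟨h1, h2⟩; exact ⟨h2, by linarith⟩
      · rintro ⟨h1, h2⟩; exact ⟨by linarith, h1⟩
    rw [hμ, Measure.restrict_apply hms, hset, svol]
  rw [show (fun t : ℝ => μ.real {a : ℝ | t < D a - pmin})
      = fun t => svol D v (pmin + t) from funext hmeas] at key
  -- LHS of key equals interval integral of D minus pmin * v
  have hDint : IntervalIntegrable D volume 0 v :=
    (hD.antitoneOn _).intervalIntegrable
  have hLHS : ∫ x, (D x - pmin) ∂μ = (∫ x in (0:ℝ)..v, D x) - pmin * v := by
    rw [hμ, MeasureTheory.integral_Ico_eq_integral_Ioo,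
      ← MeasureTheory.integral_Ioc_eq_integral_Ioo, ← intervalIntegral.integral_of_le hv,
      intervalIntegral.integral_sub hDint intervalIntegrable_const,
      intervalIntegral.integral_const]
    simp [smul_eq_mul]; ring
  -- RHS of key: restrict to Ioc 0 R
  have hanti2 : Antitone (fun t : ℝ => svol D v (pmin + t)) := by
    intro a b hab
    exact svol_anti hD hv (by linarith)
  have hint2 : IntervalIntegrable (fun t : ℝ => svol D v (pmin + t)) volume 0 (pmax - pmin) :=
    (hanti2.antitoneOn _).intervalIntegrable
  have hzero : ∀ t ∈ Set.Ioi (pmax - pmin), svol D v (pmin + t) = 0 := by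
    intro t ht
    exact svol_eq_zero hhi (by simp at ht; linarith)
  have hsplit : Set.Ioi (0:ℝ) = Set.Ioc 0 (pmax - pmin) ∪ Set.Ioi (pmax - pmin) :=
    (Set.Ioc_union_Ioi_eq_Ioi hR).symm
  have hIOn1 : IntegrableOn (fun t : ℝ => svol D v (pmin + t)) (Set.Ioc 0 (pmax - pmin)) :=
    hint2.1
  have hIOn2 : IntegrableOn (fun t : ℝ => svol D v (pmin + t)) (Set.Ioi (pmax - pmin)) := by
    refine (integrable_zero _ _ _).congr ?_
    rw [Filter.EventuallyEq, MeasureTheory.ae_restrict_iff' measurableSet_Ioi]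
    exact Filter.Eventually.of_forall (fun t ht => (hzero t ht).symm)
  have hRHS : ∫ t in Set.Ioi (0:ℝ), svol D v (pmin + t)
      = ∫ t in (0:ℝ)..(pmax - pmin), svol D v (pmin + t) := by
    rw [hsplit, MeasureTheory.setIntegral_union (Set.Ioc_disjoint_Ioi le_rfl)
      measurableSet_Ioi hIOn1 hIOn2,
      MeasureTheory.setIntegral_congr_fun measurableSet_Ioi hzero]
    simp [intervalIntegral.integral_of_le hR]
  rw [hLHS, hRHS] at key
  linarith [key]


lemma deriv_anti {gf D : ℝ → ℝ} {δv : ℝ}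
    (hconc : ConcaveOn ℝ (Set.Icc 0 δv) gf)
    (hderiv : ∀ v ∈ Set.Icc 0 δv, HasDerivWithinAt gf (D v) (Set.Icc 0 δv) v) :
    AntitoneOn D (Set.Icc 0 δv) := by
  intro x hx y hy hxy
  rcases eq_or_lt_of_le hxy with rfl | hlt
  · exact le_refl _
  have hyx : (0:ℝ) < y - x := by linarith
  have key : ∀ z ∈ Set.Ioo x y,
      ((y - z)/(y - x)) * gf x + ((z - x)/(y - x)) * gf y ≤ gf z := by
    intro z hz
    have h1 : (0:ℝ) ≤ (y - z)/(y - x) := by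
      apply div_nonneg <;> linarith [hz.2]
    have h2 : (0:ℝ) ≤ (z - x)/(y - x) := by
      apply div_nonneg <;> linarith [hz.1]
    have h3 : (y - z)/(y - x) + (z - x)/(y - x) = 1 := by
      field_simp
      ring
    have := hconc.2 hx hy h1 h2 h3
    have hz' : ((y - z)/(y - x)) • x + ((z - x)/(y - x)) • y = z := by
      simp only [smul_eq_mul]
      field_simp
      ring
    rw [hz'] at this
    simpa [smul_eq_mul] using this
  have key2 : ∀ z ∈ Set.Ioo x y, (y - z) * gf x + (z - x) * gf y ≤ gf z * (y - x) := by
    intro z hz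
    have h := key z hz
    rw [div_mul_eq_mul_div, div_mul_eq_mul_div, ← add_div, div_le_iff₀ hyx] at h
    exact h
  have hslope1 : (gf y - gf x)/(y - x) ≤ D x := by
    have htend : Filter.Tendsto (slope gf x) (nhdsWithin x (Set.Ioo x y)) (nhds (D x)) := by
      refine ((hasDerivWithinAt_iff_tendsto_slope).1 (hderiv x hx)).mono_left
        (nhdsWithin_mono x ?_)
      intro z hz
      exact ⟨⟨by linarith [hz.1, hx.1], by linarith [hz.2, hy.2]⟩, ne_of_gt hz.1⟩
    have hne : (nhdsWithin x (Set.Ioo x y)).NeBot := by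
      apply mem_closure_iff_nhdsWithin_neBot.1
      rw [closure_Ioo (ne_of_lt hlt)]
      exact ⟨le_refl x, hlt.le⟩
    refine ge_of_tendsto htend ?_
    refine eventually_nhdsWithin_of_forall (fun z hz => ?_)
    rw [slope_def_field, div_le_div_iff₀ hyx (by linarith [hz.1] : (0:ℝ) < z - x)]
    nlinarith [key2 z hz, hz.1, hz.2]
  have hslope2 : D y ≤ (gf y - gf x)/(y - x) := by
    have htend : Filter.Tendsto (slope gf y) (nhdsWithin y (Set.Ioo x y)) (nhds (D y)) := by
      refine ((hasDerivWithinAt_iff_tendsto_slope).1 (hderiv y hy)).mono_left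
        (nhdsWithin_mono y ?_)
      intro z hz
      exact ⟨⟨by linarith [hz.1, hx.1], by linarith [hz.2, hy.2]⟩, ne_of_lt hz.2⟩
    have hne : (nhdsWithin y (Set.Ioo x y)).NeBot := by
      apply mem_closure_iff_nhdsWithin_neBot.1
      rw [closure_Ioo (ne_of_lt hlt)]
      exact ⟨hlt.le, le_refl y⟩
    refine le_of_tendsto htend ?_
    refine eventually_nhdsWithin_of_forall (fun z hz => ?_)
    rw [slope_def_field]
    have hzy : (0:ℝ) < y - z := by linarith [hz.2]
    have heq : (gf z - gf y) / (z - y) = (gf y - gf z) / (y - z) := by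
      rw [div_eq_div_iff (by linarith) (by linarith)]
      ring
    rw [heq, div_le_div_iff₀ hzy hyx]
    nlinarith [key2 z hz, hz.1, hz.2]
  linarith


noncomputable def clampD (D : ℝ → ℝ) (δv : ℝ) : ℝ → ℝ := fun x => D (max 0 (min δv x))

lemma clampD_eq {D : ℝ → ℝ} {δv x : ℝ} (hx : x ∈ Set.Icc 0 δv) : clampD D δv x = D x := by
  rw [clampD, min_eq_right hx.2, max_eq_right hx.1]

lemma clampD_anti {D : ℝ → ℝ} {δv : ℝ} (hδ : 0 ≤ δv)
    (hD : AntitoneOn D (Set.Icc 0 δv)) : Antitone (clampD D δv) := by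
  intro a b hab
  have hmem : ∀ x : ℝ, max 0 (min δv x) ∈ Set.Icc 0 δv :=
    fun x => ⟨le_max_left _ _, max_le hδ (min_le_left _ _)⟩
  exact hD (hmem a) (hmem b) (max_le_max (le_refl 0) (min_le_min (le_refl δv) hab))

lemma clampD_mem {D : ℝ → ℝ} {δv : ℝ} {pmin pmax : ℝ} (hδ : 0 ≤ δv)
    (hgrad : ∀ v ∈ Set.Icc 0 δv, D v ∈ Set.Icc pmin pmax) (x : ℝ) :
    clampD D δv x ∈ Set.Icc pmin pmax :=
  hgrad _ ⟨le_max_left _ _, max_le hδ (min_le_left _ _)⟩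

lemma ftc_item {gf D : ℝ → ℝ} {δv : ℝ}
    (hderiv : ∀ v ∈ Set.Icc 0 δv, HasDerivWithinAt gf (D v) (Set.Icc 0 δv) v)
    (hanti : AntitoneOn D (Set.Icc 0 δv)) (hg0 : gf 0 = 0)
    {v : ℝ} (hv : v ∈ Set.Icc 0 δv) :
    gf v = ∫ x in (0:ℝ)..v, D x := by
  rcases eq_or_lt_of_le hv.1 with rfl | hv0
  · simp [hg0]
  have hsub : Set.Icc 0 v ⊆ Set.Icc 0 δv := Set.Icc_subset_Icc_right hv.2
  have hcont : ContinuousOn gf (Set.Icc 0 v) :=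
    fun x hx => ((hderiv x (hsub hx)).continuousWithinAt).mono hsub
  have hD' : ∀ x ∈ Set.Ioo 0 v, HasDerivWithinAt gf (D x) (Set.Ioi x) x := by
    intro x hx
    rcases eq_or_lt_of_le hv.2 with rfl | hvδ
    · exact ((hderiv x ⟨hx.1.le, hx.2.le⟩).hasDerivAt
        (Icc_mem_nhds hx.1 hx.2)).hasDerivWithinAt
    · exact ((hderiv x ⟨hx.1.le, hx.2.le.trans hv.2⟩).hasDerivAt
        (Icc_mem_nhds hx.1 (lt_of_lt_of_le hx.2 hv.2))).hasDerivWithinAt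
  have hint : IntervalIntegrable D volume 0 v := by
    apply AntitoneOn.intervalIntegrable
    apply hanti.mono
    rw [Set.uIcc_of_le hv0.le]
    exact hsub
  rw [intervalIntegral.integral_eq_sub_of_hasDeriv_right_of_le hv0.le hcont hD' hint, hg0]
  ring

lemma item_rep {gf D : ℝ → ℝ} {δv pmin pmax : ℝ} (hδ : 0 ≤ δv) (hg0 : gf 0 = 0)
    (hconc : ConcaveOn ℝ (Set.Icc 0 δv) gf)
    (hderiv : ∀ v ∈ Set.Icc 0 δv, HasDerivWithinAt gf (D v) (Set.Icc 0 δv) v)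
    (hgrad : ∀ v ∈ Set.Icc 0 δv, D v ∈ Set.Icc pmin pmax)
    {v : ℝ} (hv : v ∈ Set.Icc 0 δv) :
    gf v = pmin * v
      + ∫ s in (0:ℝ)..(pmax - pmin), min v (svol (clampD D δv) δv (pmin + s)) := by
  have hanti : AntitoneOn D (Set.Icc 0 δv) := deriv_anti hconc hderiv
  have hcanti : Antitone (clampD D δv) := clampD_anti hδ hanti
  have hlo : ∀ x, pmin ≤ clampD D δv x := fun x => (clampD_mem hδ hgrad x).1
  have hhi : ∀ x, clampD D δv x ≤ pmax := fun x => (clampD_mem hδ hgrad x).2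
  have h1 : gf v = ∫ x in (0:ℝ)..v, clampD D δv x := by
    rw [ftc_item hderiv hanti hg0 hv]
    refine intervalIntegral.integral_congr (fun x hx => ?_)
    rw [Set.uIcc_of_le hv.1] at hx
    exact (clampD_eq ⟨hx.1, hx.2.trans hv.2⟩).symm
  rw [h1, layercake_item hcanti hlo hhi hv.1]
  congr 1
  refine intervalIntegral.integral_congr (fun s _ => ?_)
  rw [svol_min hcanti hv.1 hv.2]


lemma opt_formula (A : Finset ℕ) (C pmin R : ℝ) (hC : 0 < C) (hpmin : 0 < pmin)
    (hR : 0 ≤ R) (δ : ℕ → ℝ) (gf : ℕ → ℝ → ℝ) (c : ℕ → ℝ → ℝ) (O : ℝ)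
    (hδ : ∀ τ ∈ A, 0 ≤ δ τ)
    (hc_anti : ∀ τ ∈ A, Antitone (c τ))
    (hc_nonneg : ∀ τ ∈ A, ∀ s, 0 ≤ c τ s)
    (hc_le : ∀ τ ∈ A, ∀ s, c τ s ≤ δ τ)
    (hc_top : ∀ τ ∈ A, c τ R = 0)
    (hlc : ∀ τ ∈ A, ∀ v ∈ Set.Icc 0 (δ τ),
      gf τ v = pmin * v + ∫ s in (0:ℝ)..R, min v (c τ s))
    (hO : IsGreatest {y : ℝ | ∃ v : ℕ → ℝ,
        (∀ τ ∈ A, v τ ∈ Set.Icc 0 (δ τ)) ∧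
        (∑ τ ∈ A, v τ) ≤ C ∧ y = ∑ τ ∈ A, gf τ (v τ)} O) :
    O = pmin * min C (∑ τ ∈ A, δ τ)
      + ∫ s in (0:ℝ)..R, min C (∑ τ ∈ A, c τ s) := by
  set F : ℝ → ℝ := fun s => ∑ τ ∈ A, c τ s with hF
  have hFanti : Antitone F := fun a b hab => Finset.sum_le_sum (fun τ hτ => hc_anti τ hτ hab)
  have hFnn : ∀ s, 0 ≤ F s := fun s => Finset.sum_nonneg (fun τ hτ => hc_nonneg τ hτ s)
  have hminCF_anti : Antitone (fun s => min C (F s)) :=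
    fun a b hab => min_le_min (le_refl C) (hFanti hab)
  have hintCF : ∀ x y : ℝ, IntervalIntegrable (fun s => min C (F s)) volume x y :=
    fun x y => (hminCF_anti.antitoneOn _).intervalIntegrable
  -- value formula for any feasible allocation
  have hval : ∀ v : ℕ → ℝ, (∀ τ ∈ A, v τ ∈ Set.Icc 0 (δ τ)) →
      ∑ τ ∈ A, gf τ (v τ)
        = pmin * (∑ τ ∈ A, v τ) + ∫ s in (0:ℝ)..R, ∑ τ ∈ A, min (v τ) (c τ s) := by
    intro v hv
    have h1 : ∑ τ ∈ A, gf τ (v τ)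
        = ∑ τ ∈ A, (pmin * v τ + ∫ s in (0:ℝ)..R, min (v τ) (c τ s)) :=
      Finset.sum_congr rfl (fun τ hτ => hlc τ hτ _ (hv τ hτ))
    rw [h1, Finset.sum_add_distrib, ← Finset.mul_sum,
      ← intervalIntegral.integral_finset_sum]
    intro τ hτ
    have hA : Antitone fun s => min (v τ) (c τ s) :=
      fun a b hab => min_le_min (le_refl (v τ)) (hc_anti τ hτ hab)
    exact (hA.antitoneOn _).intervalIntegrable
  have hGint : ∀ v : ℕ → ℝ, (∀ τ ∈ A, v τ ∈ Set.Icc 0 (δ τ)) → ∀ x y : ℝ,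
      IntervalIntegrable (fun s => ∑ τ ∈ A, min (v τ) (c τ s)) volume x y := by
    intro v hv x y
    have : Antitone (fun s => ∑ τ ∈ A, min (v τ) (c τ s)) :=
      fun a b hab => Finset.sum_le_sum
        (fun τ hτ => min_le_min (le_refl (v τ)) (hc_anti τ hτ hab))
    exact (this.antitoneOn _).intervalIntegrable
  -- upper bound
  have hub : O ≤ pmin * min C (∑ τ ∈ A, δ τ) + ∫ s in (0:ℝ)..R, min C (F s) := by
    obtain ⟨v, hv, hvsum, hOv⟩ := hO.1
    rw [hOv, hval v hv]
    have hbd1 : pmin * (∑ τ ∈ A, v τ) ≤ pmin * min C (∑ τ ∈ A, δ τ) := by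
      refine mul_le_mul_of_nonneg_left (le_min hvsum ?_) hpmin.le
      exact Finset.sum_le_sum (fun τ hτ => (hv τ hτ).2)
    have hbd2 : (∫ s in (0:ℝ)..R, ∑ τ ∈ A, min (v τ) (c τ s))
        ≤ ∫ s in (0:ℝ)..R, min C (F s) := by
      refine intervalIntegral.integral_mono_on hR (hGint v hv 0 R) (hintCF 0 R)
        (fun s _ => ?_)
      refine le_min ?_ ?_
      · calc ∑ τ ∈ A, min (v τ) (c τ s) ≤ ∑ τ ∈ A, v τ :=
          Finset.sum_le_sum (fun τ hτ => min_le_left _ _)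
        _ ≤ C := hvsum
      · exact Finset.sum_le_sum (fun τ hτ => min_le_right _ _)
    linarith
  refine le_antisymm hub ?_
  -- lower bound
  by_cases hcase : (∑ τ ∈ A, δ τ) ≤ C
  · -- no budget constraint binding
    have hmem : (∑ τ ∈ A, gf τ (δ τ)) ∈ {y : ℝ | ∃ v : ℕ → ℝ,
        (∀ τ ∈ A, v τ ∈ Set.Icc 0 (δ τ)) ∧
        (∑ τ ∈ A, v τ) ≤ C ∧ y = ∑ τ ∈ A, gf τ (v τ)} :=
      ⟨δ, fun τ hτ => ⟨hδ τ hτ, le_refl _⟩, hcase, rfl⟩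
    have hle := hO.2 hmem
    have heq : ∑ τ ∈ A, gf τ (δ τ)
        = pmin * min C (∑ τ ∈ A, δ τ) + ∫ s in (0:ℝ)..R, min C (F s) := by
      rw [hval δ (fun τ hτ => ⟨hδ τ hτ, le_refl _⟩), min_eq_right hcase]
      congr 1
      refine intervalIntegral.integral_congr (fun s _ => ?_)
      have h1 : ∑ τ ∈ A, min (δ τ) (c τ s) = F s :=
        Finset.sum_congr rfl (fun τ hτ => min_eq_right (hc_le τ hτ s))
      rw [h1, min_eq_right]
      calc F s ≤ F 0 ⊔ F s := le_max_right _ _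
      _ ≤ ∑ τ ∈ A, δ τ := by
        refine max_le ?_ ?_ <;> exact Finset.sum_le_sum (fun τ hτ => hc_le τ hτ _)
      _ ≤ C := hcase
    linarith
  · push_neg at hcase
    have hminC : min C (∑ τ ∈ A, δ τ) = C := min_eq_left hcase.le
    -- threshold
    set Sset : Set ℝ := {s : ℝ | 0 ≤ s ∧ F s ≤ C} with hSset
    have hRmem : R ∈ Sset := by
      constructor
      · exact hR
      · have : F R = 0 := Finset.sum_eq_zero (fun τ hτ => hc_top τ hτ)
        rw [this]; exact hC.le
    have hne : Sset.Nonempty := ⟨R, hRmem⟩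
    have hbdd : BddBelow Sset := ⟨0, fun x hx => hx.1⟩
    set tstar := sInf Sset with htstar
    have h0t : 0 ≤ tstar := le_csInf hne (fun x hx => hx.1)
    have htR : tstar ≤ R := csInf_le hbdd hRmem
    -- for every ε > 0, Ψ ≤ O + 2 C ε
    have hmain : ∀ ε : ℝ, 0 < ε →
        pmin * min C (∑ τ ∈ A, δ τ) + (∫ s in (0:ℝ)..R, min C (F s)) ≤ O + 2*C*ε := by
      intro ε hε
      obtain ⟨s₀, hs₀mem, hs₀lt⟩ := (csInf_lt_iff hbdd hne).1
        (show tstar < tstar + ε by linarith)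
      set s₁ := min s₀ R with hs₁
      have hs₁mem : s₁ ∈ Sset := by
        rcases min_cases s₀ R with ⟨h, _⟩ | ⟨h, _⟩
        · rw [hs₁, h]; exact hs₀mem
        · rw [hs₁, h]; exact hRmem
      have hts₁ : tstar ≤ s₁ := le_min (csInf_le hbdd hs₀mem) htR
      have hs₁R : s₁ ≤ R := min_le_right _ _
      have hs₁lt : s₁ < tstar + ε := lt_of_le_of_lt (min_le_left _ _) hs₀lt
      have hs₁0 : 0 ≤ s₁ := hs₁mem.1
      obtain ⟨s', b, hs'0, hs's₁, hgap, hab, hbδ, hCb, hbc⟩ :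
          ∃ (s' : ℝ) (b : ℕ → ℝ), 0 ≤ s' ∧ s' ≤ s₁ ∧ s₁ - s' ≤ 2*ε ∧
            (∀ τ ∈ A, c τ s₁ ≤ b τ) ∧ (∀ τ ∈ A, b τ ≤ δ τ) ∧
            C ≤ ∑ τ ∈ A, b τ ∧
            (s' = 0 ∨ ∀ τ ∈ A, ∀ s ∈ Set.Icc 0 s', b τ ≤ c τ s) := by
        by_cases ht0 : tstar ≤ 0
        · refine ⟨0, δ, le_refl _, hs₁0, by linarith, fun τ hτ => hc_le τ hτ _,
            fun τ hτ => le_refl _, hcase.le, Or.inl rfl⟩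
        · push_neg at ht0
          set s' := max 0 (tstar - ε) with hs'
          have hs'lt : s' < tstar := max_lt ht0 (by linarith)
          have hs'notin : s' ∉ Sset := fun hmem => absurd (csInf_le hbdd hmem) (not_le.2 hs'lt)
          have hFs' : C < F s' := by
            by_contra h
            exact hs'notin ⟨le_max_left _ _, le_of_not_gt h⟩
          refine ⟨s', fun τ => c τ s', le_max_left _ _, by linarith [hts₁], ?_,
            fun τ hτ => hc_anti τ hτ (by linarith [hts₁] : s' ≤ s₁),
            fun τ hτ => hc_le τ hτ _, le_of_lt hFs', Or.inr ?_⟩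
          · have : tstar - ε ≤ s' := le_max_right _ _
            linarith
          · intro τ hτ s hs
            exact hc_anti τ hτ hs.2
      -- the allocation
      set a : ℕ → ℝ := fun τ => c τ s₁ with ha
      have haC : (∑ τ ∈ A, a τ) ≤ C := hs₁mem.2
      have hsum_ab : (∑ τ ∈ A, a τ) ≤ ∑ τ ∈ A, b τ :=
        Finset.sum_le_sum (fun τ hτ => hab τ hτ)
      set coef : ℝ := if (∑ τ ∈ A, b τ) - (∑ τ ∈ A, a τ) = 0 then 0
        else (C - ∑ τ ∈ A, a τ) / ((∑ τ ∈ A, b τ) - (∑ τ ∈ A, a τ)) with hcoef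
      have hcoef0 : 0 ≤ coef := by
        rw [hcoef]
        split
        · exact le_refl _
        · next h => exact div_nonneg (by linarith) (lt_of_le_of_ne (by linarith) (Ne.symm h)).le
      have hcoef1 : coef ≤ 1 := by
        rw [hcoef]
        split
        · exact zero_le_one
        · next h =>
            rw [div_le_one (lt_of_le_of_ne (by linarith) (Ne.symm h))]
            linarith
      set v : ℕ → ℝ := fun τ => a τ + coef * (b τ - a τ) with hv
      have hva : ∀ τ ∈ A, a τ ≤ v τ := by
        intro τ hτ
        have := mul_nonneg hcoef0 (by linarith [hab τ hτ] : (0:ℝ) ≤ b τ - a τ)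
        simp only [hv]; linarith
      have hvb : ∀ τ ∈ A, v τ ≤ b τ := by
        intro τ hτ
        have h1 : coef * (b τ - a τ) ≤ 1 * (b τ - a τ) :=
          mul_le_mul_of_nonneg_right hcoef1 (by linarith [hab τ hτ])
        simp only [hv]; linarith
      have hvsum : (∑ τ ∈ A, v τ) = C := by
        have hs : (∑ τ ∈ A, v τ)
            = (∑ τ ∈ A, a τ) + coef * ((∑ τ ∈ A, b τ) - (∑ τ ∈ A, a τ)) := by
          simp only [hv]
          rw [Finset.sum_add_distrib, ← Finset.mul_sum, Finset.sum_sub_distrib]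
        rw [hs, hcoef]
        split
        · next h => 
            have : (∑ τ ∈ A, b τ) = ∑ τ ∈ A, a τ := by linarith
            rw [this] at hCb
            linarith
        · next h => rw [div_mul_cancel₀ _ h]; ring
      have hvmem : ∀ τ ∈ A, v τ ∈ Set.Icc 0 (δ τ) := by
        intro τ hτ
        exact ⟨(hc_nonneg τ hτ s₁).trans (hva τ hτ), (hvb τ hτ).trans (hbδ τ hτ)⟩
      have hmem : (∑ τ ∈ A, gf τ (v τ)) ∈ {y : ℝ | ∃ v : ℕ → ℝ,
          (∀ τ ∈ A, v τ ∈ Set.Icc 0 (δ τ)) ∧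
          (∑ τ ∈ A, v τ) ≤ C ∧ y = ∑ τ ∈ A, gf τ (v τ)} :=
        ⟨v, hvmem, hvsum.le, rfl⟩
      have hyO := hO.2 hmem
      -- lower bound the value
      set G : ℝ → ℝ := fun s => ∑ τ ∈ A, min (v τ) (c τ s) with hG
      have hGI := hGint v hvmem
      have hsplitG : ∫ s in (0:ℝ)..R, G s
          = (∫ s in (0:ℝ)..s', G s) + (∫ s in s'..s₁, G s) + ∫ s in s₁..R, G s := by
        rw [intervalIntegral.integral_add_adjacent_intervals (hGI 0 s') (hGI s' s₁),
          intervalIntegral.integral_add_adjacent_intervals (hGI 0 s₁) (hGI s₁ R)]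
      have hsplitF : ∫ s in (0:ℝ)..R, min C (F s)
          = (∫ s in (0:ℝ)..s', min C (F s)) + (∫ s in s'..s₁, min C (F s))
            + ∫ s in s₁..R, min C (F s) := by
        rw [intervalIntegral.integral_add_adjacent_intervals (hintCF 0 s') (hintCF s' s₁),
          intervalIntegral.integral_add_adjacent_intervals (hintCF 0 s₁) (hintCF s₁ R)]
      have hreg1 : (∫ s in (0:ℝ)..s', min C (F s)) ≤ ∫ s in (0:ℝ)..s', G s := by
        rcases hbc with rfl | hbc'
        · simp
        · refine intervalIntegral.integral_mono_on hs'0 (hintCF 0 s') (hGI 0 s')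
            (fun s hs => ?_)
          have : G s = ∑ τ ∈ A, v τ := by
            refine Finset.sum_congr rfl (fun τ hτ => ?_)
            exact min_eq_left ((hvb τ hτ).trans (hbc' τ hτ s hs))
          rw [this, hvsum]
          exact min_le_left _ _
      have hreg2a : (0:ℝ) ≤ ∫ s in s'..s₁, G s := by
        refine intervalIntegral.integral_nonneg hs's₁ (fun s _ => ?_)
        exact Finset.sum_nonneg (fun τ hτ => le_min ((hvmem τ hτ).1) (hc_nonneg τ hτ s))
      have hreg2b : (∫ s in s'..s₁, min C (F s)) ≤ 2*C*ε := by
        calc (∫ s in s'..s₁, min C (F s)) ≤ ∫ s in s'..s₁, C := by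
              refine intervalIntegral.integral_mono_on hs's₁ (hintCF s' s₁)
                intervalIntegrable_const (fun s _ => min_le_left _ _)
        _ = C * (s₁ - s') := by rw [intervalIntegral.integral_const, smul_eq_mul]; ring
        _ ≤ 2*C*ε := by nlinarith
      have hreg3 : (∫ s in s₁..R, G s) = ∫ s in s₁..R, min C (F s) := by
        refine intervalIntegral.integral_congr (fun s hs => ?_)
        rw [Set.uIcc_of_le hs₁R] at hs
        have h1 : G s = F s := by
          refine Finset.sum_congr rfl (fun τ hτ => ?_)
          exact min_eq_right ((hc_anti τ hτ hs.1).trans (hva τ hτ))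
        have h2 : F s ≤ C := le_trans (hFanti hs.1) hs₁mem.2
        rw [h1, min_eq_right h2]
      have hy : ∑ τ ∈ A, gf τ (v τ)
          = pmin * C + ∫ s in (0:ℝ)..R, G s := by rw [hval v hvmem, hvsum]
      rw [hminC]
      have : (∫ s in (0:ℝ)..R, min C (F s)) ≤ (∫ s in (0:ℝ)..R, G s) + 2*C*ε := by
        rw [hsplitG, hsplitF]
        linarith
      linarith
    -- conclude
    refine le_of_forall_pos_le_add (fun ε hε => ?_)
    have h2C : 0 < 2*C := by linarith
    have := hmain (ε / (2*C)) (div_pos hε h2C)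
    calc pmin * min C (∑ τ ∈ A, δ τ) + ∫ s in (0:ℝ)..R, min C (F s)
        ≤ O + 2*C*(ε/(2*C)) := this
    _ = O + ε := by rw [mul_div_cancel₀ _ (ne_of_gt h2C)]


lemma antiOn_div {f : ℝ → ℝ} (hf : Antitone f) (hf0 : ∀ s, 0 ≤ f s) {pmin : ℝ}
    (hpmin : 0 < pmin) : AntitoneOn (fun s => f s / (pmin + s)) (Set.Ici 0) := by
  intro x hx y hy hxy
  simp only [Set.mem_Ici] at hx hy
  have h1 : 0 < pmin + x := by linarith
  have h2 : 0 < pmin + y := by linarith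
  rw [div_le_div_iff₀ h2 h1]
  have := hf hxy
  nlinarith [hf0 y, hf0 x]

lemma intInt_of_antiOn {f : ℝ → ℝ} (h : AntitoneOn f (Set.Ici 0)) {x y : ℝ}
    (hx : 0 ≤ x) (hy : 0 ≤ y) : IntervalIntegrable f volume x y := by
  refine (h.mono ?_).intervalIntegrable
  intro z hz
  rw [Set.mem_uIcc] at hz
  rcases hz with ⟨h1, _⟩ | ⟨h1, _⟩ <;> [exact hx.trans h1; exact hy.trans h1]

lemma core_step (C pmin R π : ℝ) (hC : 0 < C) (hpmin : 0 < pmin) (hR : 0 ≤ R)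
    (hπ : 1 ≤ π) (ct Fp : ℝ → ℝ) (gt : ℝ → ℝ) (δt vh m m' : ℝ)
    (hct_anti : Antitone ct) (hct_nonneg : ∀ s, 0 ≤ ct s)
    (hFp_anti : Antitone Fp) (hFp_nonneg : ∀ s, 0 ≤ Fp s)
    (hδt : 0 ≤ δt)
    (hlc : ∀ v ∈ Set.Icc 0 δt, gt v = pmin * v + ∫ s in (0:ℝ)..R, min v (ct s))
    (hmono : StrictMonoOn gt (Set.Icc 0 δt))
    (hvh : vh ∈ Set.Icc 0 δt) (hmm' : m ≤ m')
    (heq : π * gt vh = pmin * (m' - m) +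
      ((∫ s in (0:ℝ)..R, min C (Fp s + ct s)) - ∫ s in (0:ℝ)..R, min C (Fp s))) :
    π * vh ≤ (m' - m) +
      ((∫ s in (0:ℝ)..R, min C (Fp s + ct s) / (pmin + s)) -
       ∫ s in (0:ℝ)..R, min C (Fp s) / (pmin + s)) := by
  have hπ0 : (0:ℝ) < π := by linarith
  -- basic functions
  set f1 : ℝ → ℝ := fun s => min C (Fp s + ct s) with hf1
  set f2 : ℝ → ℝ := fun s => min C (Fp s) with hf2
  have hf1anti : Antitone f1 := fun x y hxy =>
    min_le_min (le_refl C) (add_le_add (hFp_anti hxy) (hct_anti hxy))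
  have hf2anti : Antitone f2 := fun x y hxy => min_le_min (le_refl C) (hFp_anti hxy)
  have hf1nn : ∀ s, 0 ≤ f1 s := fun s => le_min hC.le (by linarith [hFp_nonneg s, hct_nonneg s])
  have hf2nn : ∀ s, 0 ≤ f2 s := fun s => le_min hC.le (hFp_nonneg s)
  have hΔnn : ∀ s, 0 ≤ f1 s - f2 s := fun s => by
    have : f2 s ≤ f1 s := min_le_min (le_refl C) (by linarith [hct_nonneg s])
    linarith
  have hΔle : ∀ s, f1 s - f2 s ≤ ct s := by
    intro s
    simp only [hf1, hf2, min_def]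
    split_ifs <;> linarith [hct_nonneg s, hFp_nonneg s]
  -- integrability
  have hi1 : ∀ x y : ℝ, 0 ≤ x → 0 ≤ y → IntervalIntegrable f1 volume x y :=
    fun x y _ _ => (hf1anti.antitoneOn _).intervalIntegrable
  have hi2 : ∀ x y : ℝ, 0 ≤ x → 0 ≤ y → IntervalIntegrable f2 volume x y :=
    fun x y _ _ => (hf2anti.antitoneOn _).intervalIntegrable
  have hi1' : ∀ x y : ℝ, 0 ≤ x → 0 ≤ y →
      IntervalIntegrable (fun s => f1 s / (pmin + s)) volume x y :=
    fun x y hx hy => intInt_of_antiOn (antiOn_div hf1anti hf1nn hpmin) hx hy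
  have hi2' : ∀ x y : ℝ, 0 ≤ x → 0 ≤ y →
      IntervalIntegrable (fun s => f2 s / (pmin + s)) volume x y :=
    fun x y hx hy => intInt_of_antiOn (antiOn_div hf2anti hf2nn hpmin) hx hy
  set K : ℝ := (m' - m) +
      ((∫ s in (0:ℝ)..R, f1 s / (pmin + s)) - ∫ s in (0:ℝ)..R, f2 s / (pmin + s)) with hK
  have hf2le1 : ∀ s, f2 s ≤ f1 s :=
    fun s => min_le_min (le_refl C) (by linarith [hct_nonneg s])
  have hIdiff : ∀ x y : ℝ, 0 ≤ x → 0 ≤ y →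
      (∫ s in x..y, f2 s / (pmin + s)) ≤ ∫ s in x..y, f1 s / (pmin + s) → True := fun _ _ _ _ _ => trivial
  have hKnn : 0 ≤ K := by
    have h1 : (∫ s in (0:ℝ)..R, f2 s / (pmin + s)) ≤ ∫ s in (0:ℝ)..R, f1 s / (pmin + s) := by
      refine intervalIntegral.integral_mono_on hR (hi2' 0 R le_rfl hR) (hi1' 0 R le_rfl hR)
        (fun s hs => ?_)
      have hps : 0 < pmin + s := by linarith [hs.1]
      exact (div_le_div_iff_of_pos_right hps).2 (hf2le1 s)
    rw [hK]
    linarith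
  set w : ℝ := K / π with hw
  have hw0 : 0 ≤ w := div_nonneg hKnn hπ0.le
  have hπw : π * w = K := by rw [hw]; field_simp
  by_cases hwd : δt ≤ w
  · calc π * vh ≤ π * w := mul_le_mul_of_nonneg_left (hvh.2.trans hwd) hπ0.le
    _ = K := hπw
  push_neg at hwd
  have hwmem : w ∈ Set.Icc 0 δt := ⟨hw0, hwd.le⟩
  -- the threshold a
  set Aset : Set ℝ := {s : ℝ | s ∈ Set.Icc 0 R ∧ w ≤ ct s} with hAset
  set a : ℝ := sSup Aset with haa
  have hbddA : BddAbove Aset := ⟨R, fun x hx => hx.1.2⟩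
  have ha0 : 0 ≤ a := by
    rcases Aset.eq_empty_or_nonempty with he | hne
    · rw [haa, he, Real.sSup_empty]
    · obtain ⟨x, hx⟩ := hne
      exact hx.1.1.trans (le_csSup hbddA hx)
  have haR : a ≤ R := by
    rcases Aset.eq_empty_or_nonempty with he | hne
    · rw [haa, he, Real.sSup_empty]; exact hR
    · exact csSup_le hne (fun x hx => hx.1.2)
  have hwlt : ∀ s, 0 ≤ s → s < a → w ≤ ct s := by
    intro s hs0 hsa
    have hne : Aset.Nonempty := by
      rcases Aset.eq_empty_or_nonempty with he | hne
      · rw [haa, he, Real.sSup_empty] at hsa; linarith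
      · exact hne
    obtain ⟨x, hx, hsx⟩ := exists_lt_of_lt_csSup hne hsa
    exact le_trans hx.2 (hct_anti hsx.le)
  have hgta : ∀ s, a < s → s ≤ R → ct s < w := by
    intro s has hsR
    by_contra h
    push_neg at h
    have : s ∈ Aset := ⟨⟨ha0.trans has.le, hsR⟩, h⟩
    exact absurd (le_csSup hbddA this) (not_le.2 has)
  -- ae facts
  have hae_ne : ∀ᵐ s : ℝ ∂volume, s ≠ a := by
    have : volume ({a} : Set ℝ) = 0 := Real.volume_singleton
    rw [MeasureTheory.ae_iff]
    convert this using 2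
    ext s; simp
  -- layer cake at w
  have hgtw : gt w = pmin * w + ∫ s in (0:ℝ)..R, min w (ct s) := hlc w hwmem
  have hminw_anti : Antitone (fun s => min w (ct s)) :=
    fun x y hxy => min_le_min (le_refl w) (hct_anti hxy)
  have hiw : ∀ x y : ℝ, IntervalIntegrable (fun s => min w (ct s)) volume x y :=
    fun x y => (hminw_anti.antitoneOn _).intervalIntegrable
  -- Step 2 : lower bound for π * gt w
  have hsplitw : ∫ s in (0:ℝ)..R, min w (ct s)
      = (∫ s in (0:ℝ)..a, min w (ct s)) + ∫ s in a..R, min w (ct s) :=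
    (intervalIntegral.integral_add_adjacent_intervals (hiw 0 a) (hiw a R)).symm
  have hreg_low : w * a ≤ ∫ s in (0:ℝ)..a, min w (ct s) := by
    have hconst : (∫ s in (0:ℝ)..a, w) = w * a := by
      rw [intervalIntegral.integral_const, smul_eq_mul]; ring
    rw [← hconst]
    refine intervalIntegral.integral_mono_ae_restrict ha0 intervalIntegrable_const (hiw 0 a) ?_
    rw [Filter.EventuallyLE, MeasureTheory.ae_restrict_iff' measurableSet_Icc]
    filter_upwards [hae_ne] with s hsne hs
    have hsa : s < a := lt_of_le_of_ne hs.2 hsne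
    exact le_min (le_refl w) (hwlt s hs.1 hsa)
  have hreg_hi_nn : 0 ≤ ∫ s in a..R, min w (ct s) :=
    intervalIntegral.integral_nonneg haR (fun s _ => le_min hw0 (hct_nonneg s))
  have hstep2 : (pmin + a) * (π * w) + (∫ s in a..R, min w (ct s)) ≤ π * gt w := by
    have h1 : π * gt w = π * pmin * w + π * ((∫ s in (0:ℝ)..a, min w (ct s))
        + ∫ s in a..R, min w (ct s)) := by
      rw [hgtw, hsplitw]; ring
    have h2 : π * (w * a) ≤ π * ∫ s in (0:ℝ)..a, min w (ct s) :=
      mul_le_mul_of_nonneg_left hreg_low hπ0.le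
    have h3 : (∫ s in a..R, min w (ct s)) ≤ π * ∫ s in a..R, min w (ct s) := by
      nlinarith
    nlinarith [hpmin.le, hw0]
  -- Step 1 : upper bound for π * gt vh = η
  -- combined integrand
  set Δ : ℝ → ℝ := fun s => f1 s - f2 s with hΔ
  have hiΔ : ∀ x y : ℝ, 0 ≤ x → 0 ≤ y → IntervalIntegrable Δ volume x y :=
    fun x y hx hy => (hi1 x y hx hy).sub (hi2 x y hx hy)
  have hiΔ' : ∀ x y : ℝ, 0 ≤ x → 0 ≤ y →
      IntervalIntegrable (fun s => Δ s / (pmin + s)) volume x y := by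
    intro x y hx hy
    have : (fun s => Δ s / (pmin + s))
        = fun s => f1 s / (pmin + s) - f2 s / (pmin + s) := by
      funext s; rw [hΔ, sub_div]
    rw [this]
    exact (hi1' x y hx hy).sub (hi2' x y hx hy)
  have hintΔ : ∀ x y : ℝ, 0 ≤ x → 0 ≤ y → (∫ s in x..y, Δ s)
      = (∫ s in x..y, f1 s) - ∫ s in x..y, f2 s :=
    fun x y hx hy => intervalIntegral.integral_sub (hi1 x y hx hy) (hi2 x y hx hy)
  have hintΔ' : (∫ s in (0:ℝ)..R, Δ s / (pmin + s))
      = (∫ s in (0:ℝ)..R, f1 s / (pmin + s)) - ∫ s in (0:ℝ)..R, f2 s / (pmin + s) := by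
    have : (fun s => Δ s / (pmin + s))
        = fun s => f1 s / (pmin + s) - f2 s / (pmin + s) := by
      funext s; rw [hΔ, sub_div]
    rw [this]
    exact intervalIntegral.integral_sub (hi1' 0 R le_rfl hR) (hi2' 0 R le_rfl hR)
  have hη : π * gt vh = pmin * (m' - m) + ∫ s in (0:ℝ)..R, Δ s := by
    rw [heq, hintΔ 0 R le_rfl hR]
  have hsplitΔ : (∫ s in (0:ℝ)..R, Δ s) = (∫ s in (0:ℝ)..a, Δ s) + ∫ s in a..R, Δ s :=
    (intervalIntegral.integral_add_adjacent_intervals (hiΔ 0 a le_rfl ha0)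
      (hiΔ a R ha0 hR)).symm
  have hsplitΔ' : (∫ s in (0:ℝ)..R, Δ s / (pmin + s))
      = (∫ s in (0:ℝ)..a, Δ s / (pmin + s)) + ∫ s in a..R, Δ s / (pmin + s) :=
    (intervalIntegral.integral_add_adjacent_intervals (hiΔ' 0 a le_rfl ha0)
      (hiΔ' a R ha0 hR)).symm
  -- Bound A: ∫_0^a Δ ≤ (pmin + a) * ∫_0^a Δ/(pmin+s)
  have hbA : (∫ s in (0:ℝ)..a, Δ s)
      ≤ (pmin + a) * ∫ s in (0:ℝ)..a, Δ s / (pmin + s) := by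
    rw [← intervalIntegral.integral_const_mul]
    refine intervalIntegral.integral_mono_on ha0 (hiΔ 0 a le_rfl ha0) ?_ (fun s hs => ?_)
    · exact (hiΔ' 0 a le_rfl ha0).const_mul _
    · have hps : 0 < pmin + s := by linarith [hs.1]
      have h1 : Δ s = (pmin + s) * (Δ s / (pmin + s)) := by field_simp
      have h2 : 0 ≤ Δ s / (pmin + s) := div_nonneg (hΔnn s) hps.le
      calc Δ s = (pmin + s) * (Δ s / (pmin + s)) := h1
      _ ≤ (pmin + a) * (Δ s / (pmin + s)) :=
        mul_le_mul_of_nonneg_right (by linarith [hs.2]) h2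
  -- Bound B: ∫_0^a Δ/(pmin+s) ≤ ∫_0^R Δ/(pmin+s)
  have hbB : (∫ s in (0:ℝ)..a, Δ s / (pmin + s)) ≤ ∫ s in (0:ℝ)..R, Δ s / (pmin + s) := by
    rw [hsplitΔ']
    have : 0 ≤ ∫ s in a..R, Δ s / (pmin + s) :=
      intervalIntegral.integral_nonneg haR
        (fun s hs => div_nonneg (hΔnn s) (by linarith [ha0.trans hs.1]))
    linarith
  -- Bound C: ∫_a^R Δ ≤ ∫_a^R min w (ct s)
  have hbC : (∫ s in a..R, Δ s) ≤ ∫ s in a..R, min w (ct s) := by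
    refine intervalIntegral.integral_mono_ae_restrict haR (hiΔ a R ha0 hR) (hiw a R) ?_
    rw [Filter.EventuallyLE, MeasureTheory.ae_restrict_iff' measurableSet_Icc]
    filter_upwards [hae_ne] with s hsne hs
    have hsa : a < s := lt_of_le_of_ne hs.1 (Ne.symm hsne)
    exact le_min ((hΔle s).trans (hgta s hsa hs.2).le) (hΔle s)
  -- conclude step 1
  have hstep1 : π * gt vh ≤ (pmin + a) * K + ∫ s in a..R, min w (ct s) := by
    rw [hη, hsplitΔ]
    have hKΔ : K = (m' - m) + ∫ s in (0:ℝ)..R, Δ s / (pmin + s) := by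
      rw [hK, hintΔ']
    have h0 : pmin * (m' - m) ≤ (pmin + a) * (m' - m) := by nlinarith
    have h1 : (∫ s in (0:ℝ)..a, Δ s)
        ≤ (pmin + a) * ∫ s in (0:ℝ)..R, Δ s / (pmin + s) := by
      refine hbA.trans (mul_le_mul_of_nonneg_left hbB (by linarith))
    rw [hKΔ, mul_add]
    linarith [hbC]
  -- combine
  have hfinal : π * gt vh ≤ π * gt w := by
    rw [← hπw] at hstep1
    linarith [hstep2]
  have hgle : gt vh ≤ gt w := le_of_mul_le_mul_left hfinal hπ0
  have hvw : vh ≤ w := by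
    by_contra h
    push_neg at h
    exact absurd (hmono hwmem hvh h) (not_lt.2 hgle)
  calc π * vh ≤ π * w := mul_le_mul_of_nonneg_left hvw hπ0.le
  _ = K := hπw


lemma tele (φ : ℕ → ℝ) : ∀ T : ℕ, ∑ t ∈ Finset.Icc 1 T, (φ t - φ (t - 1)) = φ T - φ 0 := by
  intro T
  induction T with
  | zero => simp
  | succ T ih =>
    have hins : Finset.Icc 1 (T + 1) = insert (T + 1) (Finset.Icc 1 T) := by
      ext x
      simp only [Finset.mem_Icc, Finset.mem_insert]
      omega
    rw [hins, Finset.sum_insert (by simp), ih]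
    simp only [Nat.add_sub_cancel]
    ring

lemma loginteg {pmin pmax : ℝ} (h0 : 0 < pmin) (h : pmin ≤ pmax) :
    ∫ s in (0:ℝ)..(pmax - pmin), (pmin + s)⁻¹ = Real.log (pmax / pmin) := by
  have := intervalIntegral.integral_comp_add_left (a := (0:ℝ)) (b := pmax - pmin)
    (fun x : ℝ => x⁻¹) pmin
  simp only [add_zero] at this
  rw [this, show pmin + (pmax - pmin) = pmax by ring,
    integral_inv_of_pos h0 (lt_of_lt_of_le h0 h)]



theorem stmt_5 (T : ℕ) (C pmin pmax θ π : ℝ)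
    (g : ℕ → ℝ → ℝ) (g' : ℕ → ℝ → ℝ) (δ : ℕ → ℝ)
    (OPT : ℕ → ℝ) (vhat : ℕ → ℝ)
    (hC : 0 < C) (hpmin : 0 < pmin) (hp : pmin ≤ pmax)
    (hθ : θ = pmax / pmin)
    (hδ : ∀ t ∈ Finset.Icc 1 T, 0 ≤ δ t)
    (hconc : ∀ t ∈ Finset.Icc 1 T, ConcaveOn ℝ (Set.Icc 0 (δ t)) (g t))
    (hmono : ∀ t ∈ Finset.Icc 1 T, StrictMonoOn (g t) (Set.Icc 0 (δ t)))
    (hg0 : ∀ t ∈ Finset.Icc 1 T, g t 0 = 0)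
    (hderiv : ∀ t ∈ Finset.Icc 1 T, ∀ v ∈ Set.Icc 0 (δ t),
      HasDerivWithinAt (g t) (g' t v) (Set.Icc 0 (δ t)) v)
    (hgrad : ∀ t ∈ Finset.Icc 1 T, ∀ v ∈ Set.Icc 0 (δ t), g' t v ∈ Set.Icc pmin pmax)
    (hOPT0 : OPT 0 = 0)
    (hOPT : ∀ t ∈ Finset.Icc 1 T,
      IsGreatest {y : ℝ | ∃ v : ℕ → ℝ,
        (∀ τ ∈ Finset.Icc 1 t, v τ ∈ Set.Icc 0 (δ τ)) ∧
        (∑ τ ∈ Finset.Icc 1 t, v τ) ≤ C ∧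
        y = ∑ τ ∈ Finset.Icc 1 t, g τ (v τ)} (OPT t))
    (hπ : π = Real.log θ + 1)
    (hpursuit : ∀ t ∈ Finset.Icc 1 T,
      g t (vhat t) = (1 / π) * (OPT t - OPT (t - 1)))
    (hvhat : ∀ t ∈ Finset.Icc 1 T, vhat t ∈ Set.Icc 0 (δ t)) :
    (∑ t ∈ Finset.Icc 1 T, vhat t) ≤ C ∧
    (∑ t ∈ Finset.Icc 1 T, g t (vhat t)) = (1 / π) * OPT T := by
  -- basic facts
  have hθ1 : 1 ≤ θ := by
    rw [hθ]
    exact (one_le_div hpmin).2 hp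
  have hπ1 : 1 ≤ π := by
    have := Real.log_nonneg hθ1
    rw [hπ]; linarith
  have hπ0 : 0 < π := by linarith
  set R : ℝ := pmax - pmin with hRdef
  have hR : 0 ≤ R := by rw [hRdef]; linarith
  set cI : ℕ → ℝ → ℝ :=
    fun τ s => svol (clampD (g' τ) (δ τ)) (δ τ) (pmin + s) with hcI
  -- per-item facts
  have hitem : ∀ τ ∈ Finset.Icc 1 T,
      Antitone (cI τ) ∧ (∀ s, 0 ≤ cI τ s) ∧ (∀ s, cI τ s ≤ δ τ) ∧ cI τ R = 0 ∧
      (∀ v ∈ Set.Icc 0 (δ τ),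
        g τ v = pmin * v + ∫ s in (0:ℝ)..R, min v (cI τ s)) := by
    intro τ hτ
    have hδτ := hδ τ hτ
    have hanti := deriv_anti (hconc τ hτ) (hderiv τ hτ)
    have hcanti := clampD_anti hδτ hanti
    refine ⟨fun x y hxy => svol_anti hcanti hδτ (add_le_add_right hxy pmin),
      fun s => svol_nonneg _ _ _,
      fun s => svol_le hcanti hδτ _,
      svol_eq_zero (fun x => (clampD_mem hδτ (hgrad τ hτ) x).2)
        (by rw [hRdef]; linarith),
      fun v hv => item_rep hδτ (hg0 τ hτ) (hconc τ hτ) (hderiv τ hτ) (hgrad τ hτ) hv⟩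
  -- the OPT formula
  have hOPTF : ∀ t, t ≤ T → OPT t
      = pmin * min C (∑ τ ∈ Finset.Icc 1 t, δ τ)
        + ∫ s in (0:ℝ)..R, min C (∑ τ ∈ Finset.Icc 1 t, cI τ s) := by
    intro t ht
    rcases Nat.eq_zero_or_pos t with rfl | ht1
    · have he : Finset.Icc 1 0 = (∅ : Finset ℕ) := Finset.Icc_eq_empty (by omega)
      rw [hOPT0, he]
      simp [min_eq_right hC.le]
    · have hsub : ∀ τ ∈ Finset.Icc 1 t, τ ∈ Finset.Icc 1 T := by
        intro τ hτm
        simp only [Finset.mem_Icc] at *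
        omega
      exact opt_formula (Finset.Icc 1 t) C pmin R hC hpmin hR δ g cI (OPT t)
        (fun τ h => hδ τ (hsub τ h))
        (fun τ h => (hitem τ (hsub τ h)).1)
        (fun τ h => (hitem τ (hsub τ h)).2.1)
        (fun τ h s => (hitem τ (hsub τ h)).2.2.1 s)
        (fun τ h => (hitem τ (hsub τ h)).2.2.2.1)
        (fun τ h => (hitem τ (hsub τ h)).2.2.2.2)
        (hOPT t (by simp only [Finset.mem_Icc]; omega))
  -- the potential
  set Φ : ℕ → ℝ := fun t => min C (∑ τ ∈ Finset.Icc 1 t, δ τ)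
    + ∫ s in (0:ℝ)..R, (min C (∑ τ ∈ Finset.Icc 1 t, cI τ s)) / (pmin + s) with hΦ
  -- key step
  have hkey : ∀ t ∈ Finset.Icc 1 T, π * vhat t ≤ Φ t - Φ (t - 1) := by
    intro t ht
    have ht' : 1 ≤ t ∧ t ≤ T := by simpa [Finset.mem_Icc] using ht
    have hnm : t ∉ Finset.Icc 1 (t - 1) := by
      simp only [Finset.mem_Icc]; omega
    have hins : Finset.Icc 1 t = insert t (Finset.Icc 1 (t - 1)) := by
      ext x
      simp only [Finset.mem_Icc, Finset.mem_insert]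
      omega
    have hsubprev : ∀ τ ∈ Finset.Icc 1 (t-1), τ ∈ Finset.Icc 1 T := by
      intro τ hτ
      simp only [Finset.mem_Icc] at *
      omega
    set Fp : ℝ → ℝ := fun s => ∑ τ ∈ Finset.Icc 1 (t-1), cI τ s with hFp
    have hFpanti : Antitone Fp := fun x y hxy =>
      Finset.sum_le_sum (fun τ hτ => (hitem τ (hsubprev τ hτ)).1 hxy)
    have hFpnn : ∀ s, 0 ≤ Fp s := fun s =>
      Finset.sum_nonneg (fun τ hτ => (hitem τ (hsubprev τ hτ)).2.1 s)
    have hsum_c : ∀ s, (∑ τ ∈ Finset.Icc 1 t, cI τ s) = Fp s + cI t s := by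
      intro s
      rw [hins, Finset.sum_insert hnm, hFp]
      ring
    have hsum_δ : (∑ τ ∈ Finset.Icc 1 t, δ τ)
        = (∑ τ ∈ Finset.Icc 1 (t-1), δ τ) + δ t := by
      rw [hins, Finset.sum_insert hnm]
      ring
    set m : ℝ := min C (∑ τ ∈ Finset.Icc 1 (t-1), δ τ) with hm
    set m' : ℝ := min C (∑ τ ∈ Finset.Icc 1 t, δ τ) with hm'
    have hmm' : m ≤ m' := by
      refine min_le_min (le_refl C) ?_
      rw [hsum_δ]
      linarith [hδ t ht]
    have hceq : ∀ x : ℝ, (fun s => min C (∑ τ ∈ Finset.Icc 1 t, cI τ s))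
        = (fun s => min C (Fp s + cI t s)) := by
      intro _; funext s; rw [hsum_c s]
    have heq : π * g t (vhat t) = pmin * (m' - m) +
        ((∫ s in (0:ℝ)..R, min C (Fp s + cI t s))
          - ∫ s in (0:ℝ)..R, min C (Fp s)) := by
      have h1 : π * g t (vhat t) = OPT t - OPT (t-1) := by
        rw [hpursuit t ht]
        field_simp
      rw [h1, hOPTF t ht'.2, hOPTF (t-1) (by omega), ← hceq 0, hm, hm']
      ring
    have hconc_t := core_step C pmin R π hC hpmin hR hπ1 (cI t) Fp (g t) (δ t)
      (vhat t) m m' (hitem t ht).1 (hitem t ht).2.1 hFpanti hFpnn (hδ t ht)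
      (hitem t ht).2.2.2.2 (hmono t ht) (hvhat t ht) hmm' heq
    calc π * vhat t ≤ (m' - m) +
        ((∫ s in (0:ℝ)..R, min C (Fp s + cI t s) / (pmin + s))
          - ∫ s in (0:ℝ)..R, min C (Fp s) / (pmin + s)) := hconc_t
    _ = Φ t - Φ (t - 1) := by
        rw [hΦ]
        have h2 : (∫ s in (0:ℝ)..R, min C (Fp s + cI t s) / (pmin + s))
            = ∫ s in (0:ℝ)..R, (min C (∑ τ ∈ Finset.Icc 1 t, cI τ s)) / (pmin + s) := by
          refine intervalIntegral.integral_congr (fun s _ => ?_)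
          rw [hsum_c s]
        rw [h2, hm, hm']
        ring
  -- telescoping
  have hΦ0 : Φ 0 = 0 := by
    have he : Finset.Icc 1 0 = (∅ : Finset ℕ) := Finset.Icc_eq_empty (by omega)
    rw [hΦ]
    simp [he, min_eq_right hC.le]
  have hsum1 : π * (∑ t ∈ Finset.Icc 1 T, vhat t) ≤ Φ T := by
    rw [Finset.mul_sum]
    calc (∑ t ∈ Finset.Icc 1 T, π * vhat t)
        ≤ ∑ t ∈ Finset.Icc 1 T, (Φ t - Φ (t - 1)) := Finset.sum_le_sum hkey
    _ = Φ T - Φ 0 := tele Φ T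
    _ = Φ T := by rw [hΦ0]; ring
  -- bound on Φ T
  have hFTanti : Antitone (fun s => ∑ τ ∈ Finset.Icc 1 T, cI τ s) := fun x y hxy =>
    Finset.sum_le_sum (fun τ hτ => (hitem τ hτ).1 hxy)
  have hFTnn : ∀ s, 0 ≤ ∑ τ ∈ Finset.Icc 1 T, cI τ s := fun s =>
    Finset.sum_nonneg (fun τ hτ => (hitem τ hτ).2.1 s)
  have hminFT_anti : Antitone (fun s => min C (∑ τ ∈ Finset.Icc 1 T, cI τ s)) :=
    fun x y hxy => min_le_min (le_refl C) (hFTanti hxy)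
  have hminFT_nn : ∀ s, 0 ≤ min C (∑ τ ∈ Finset.Icc 1 T, cI τ s) :=
    fun s => le_min hC.le (hFTnn s)
  have hconstC_anti : Antitone (fun _ : ℝ => C) := fun _ _ _ => le_refl C
  have hΦT : Φ T ≤ π * C := by
    have h1 : min C (∑ τ ∈ Finset.Icc 1 T, δ τ) ≤ C := min_le_left _ _
    have h2 : (∫ s in (0:ℝ)..R, (min C (∑ τ ∈ Finset.Icc 1 T, cI τ s)) / (pmin + s))
        ≤ ∫ s in (0:ℝ)..R, C / (pmin + s) := by
      refine intervalIntegral.integral_mono_on hR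
        (intInt_of_antiOn (antiOn_div hminFT_anti hminFT_nn hpmin) le_rfl hR)
        (intInt_of_antiOn (antiOn_div hconstC_anti (fun _ => hC.le) hpmin) le_rfl hR)
        (fun s hs => ?_)
      have hps : 0 < pmin + s := by linarith [hs.1]
      exact (div_le_div_iff_of_pos_right hps).2 (min_le_left _ _)
    have h3 : (∫ s in (0:ℝ)..R, C / (pmin + s)) = C * Real.log θ := by
      simp only [div_eq_mul_inv]
      rw [intervalIntegral.integral_const_mul, hRdef, loginteg hpmin hp, hθ]
    have h4 : π * C = C + C * Real.log θ := by rw [hπ]; ring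
    rw [hΦ, h4]
    linarith
  have hfeas : (∑ t ∈ Finset.Icc 1 T, vhat t) ≤ C := by
    have := hsum1.trans hΦT
    exact le_of_mul_le_mul_left this hπ0
  refine ⟨hfeas, ?_⟩
  calc (∑ t ∈ Finset.Icc 1 T, g t (vhat t))
      = ∑ t ∈ Finset.Icc 1 T, (1/π) * (OPT t - OPT (t-1)) :=
        Finset.sum_congr rfl (fun t ht => hpursuit t ht)
  _ = (1/π) * ∑ t ∈ Finset.Icc 1 T, (OPT t - OPT (t-1)) := by rw [Finset.mul_sum]
  _ = (1/π) * (OPT T - OPT 0) := by rw [tele OPT T]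
  _ = (1/π) * OPT T := by rw [hOPT0]; ring
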